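/- If I is additionally strongly linearizable and C is a reachable bivalent configuration of algorithm A, then no operation has completed in C. -/
import Mathlib


/-!
A model of asynchronous message-passing systems with `n` processes, following
Fischer–Lynch–Paterson: in a step `(p, m)` process `p` receives message `m`
(`none` if no message), changes its local state, and sends a finite set of messages.
Object implementations encode invocations and responses of operations as changes
of the state of the invoking process.
-/

namespace MP

/-- A step `(p, m)`: process `p` takes a step in which it attempts to receive a
message; it receives `m`, where `m = none` means it receives no message. -/
abbrev Step (n : ℕ) (Msg : Type) : Type := Fin n × Option Msg

/-- An operation event: the invocation of an operation `o`, or the response of `o`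
with return value `v`. -/
inductive Event (Op Val : Type) : Type
  | inv (o : Op)
  | res (o : Op) (v : Val)
deriving DecidableEq

/-- The operation an event belongs to. -/
def Event.opOf {Op Val : Type} : Event Op Val → Op
  | .inv o => o
  | .res o _ => o

/-- A (deterministic) message-passing implementation for `n` processes, of an object
with operations `Op` returning values in `Val`.  In each step a process receives at
most one message, changes its local state via `trans`, and sends a finite list of
messages; invocations and responses of operations are encoded (via `eventOf`) as
changes of the state of the invoking process.  `procOf o` is the process that may
invoke operation `o`. -/
structure Impl (n : ℕ) (Op Val : Type) : Type 1 where
  Msg : Type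
  PState : Type
  init : Fin n → PState
  trans : Fin n → PState → Option Msg → PState × List (Fin n × Msg)
  eventOf : Fin n → PState → PState → Option (Event Op Val)
  procOf : Op → Fin n

variable {n : ℕ} {Op Val : Type}

/-- A configuration: the local states of all processes together with the message
buffer (the multiset of all messages sent but not yet received, tagged with their
destination process). -/
structure Config (I : Impl n Op Val) : Type where
  states : Fin n → I.PState
  buffer : Multiset (Fin n × I.Msg)

/-- The initial configuration: all processes in their initial states, empty buffer. -/
def initConfig (I : Impl n Op Val) : Config I :=
  ⟨I.init, 0⟩

/-- A step `(p, some m)` is applicable to `C` iff `m` is in the buffer for `p`;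
a step `(p, none)` is always applicable. -/
def Applicable (I : Impl n Op Val) (C : Config I) (e : Step n I.Msg) : Prop :=
  match e.2 with
  | none => True
  | some m => (e.1, m) ∈ C.buffer

open scoped Classical in
/-- The configuration resulting from applying step `e` to configuration `C`:
the stepping process changes state, the received message (if any) is removed from
the buffer, and the sent messages are added to it. -/
noncomputable def applyStep (I : Impl n Op Val) (C : Config I) (e : Step n I.Msg) :
    Config I :=
  { states := Function.update C.states e.1 (I.trans e.1 (C.states e.1) e.2).1
    buffer :=
      (match e.2 with
        | none => C.buffer
        | some m => C.buffer.erase (e.1, m))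
      + ((I.trans e.1 (C.states e.1) e.2).2 : Multiset (Fin n × I.Msg)) }

/-- A finite history (sequence of steps) `H` is applicable to `C` if each of its
steps is applicable in turn. -/
def ApplicableHist (I : Impl n Op Val) : Config I → List (Step n I.Msg) → Prop
  | _, [] => True
  | C, e :: H => Applicable I C e ∧ ApplicableHist I (applyStep I C e) H

/-- `H(C)`: the configuration obtained by applying the finite history `H` to `C`. -/
noncomputable def applyHist (I : Impl n Op Val) : Config I → List (Step n I.Msg) → Config I
  | C, [] => C
  | C, e :: H => applyHist I (applyStep I C e) H

/-- The event (if any) encoded by the state change of the process taking step `e`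
from configuration `C`. -/
noncomputable def stepEvent (I : Impl n Op Val) (C : Config I) (e : Step n I.Msg) :
    Option (Event Op Val) :=
  I.eventOf e.1 (C.states e.1) ((applyStep I C e).states e.1)

/-- The operation-level history (sequence of invocation/response events) of the run
in which `H` is applied to `C`. -/
noncomputable def runEvents (I : Impl n Op Val) :
    Config I → List (Step n I.Msg) → List (Event Op Val)
  | _, [] => []
  | C, e :: H => (stepEvent I C e).toList ++ runEvents I (applyStep I C e) H

/-- The set of (finite) histories of implementation `I`: all finite histories
applicable to the initial configuration.  (This set is prefix-closed.) -/
def Histories (I : Impl n Op Val) : Set (List (Step n I.Msg)) :=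
  {H | ApplicableHist I (initConfig I) H}

/-- The operation-level events of a history `H` of `I`. -/
noncomputable def events (I : Impl n Op Val) (H : List (Step n I.Msg)) :
    List (Event Op Val) :=
  runEvents I (initConfig I) H

/-- Operation `o` has been invoked in the event history `L`. -/
def Invoked (o : Op) (L : List (Event Op Val)) : Prop := Event.inv o ∈ L

/-- Operation `o` is complete in the event history `L`: `L` contains both its
invocation and a response for it. -/
def Completed (o : Op) (L : List (Event Op Val)) : Prop :=
  Event.inv o ∈ L ∧ ∃ v, Event.res o v ∈ L

/-- Operation `o` is pending in `L`: invoked but with no response. -/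
def Pending (o : Op) (L : List (Event Op Val)) : Prop :=
  Event.inv o ∈ L ∧ ∀ v, Event.res o v ∉ L

/-- `o` precedes `o'` in `L`: a response of `o` occurs (strictly) before the
invocation of `o'`. -/
def Precedes (L : List (Event Op Val)) (o o' : Op) : Prop :=
  ∃ (i j : ℕ) (hi : i < L.length) (hj : j < L.length),
    i < j ∧ (∃ v, L.get ⟨i, hi⟩ = Event.res o v) ∧ L.get ⟨j, hj⟩ = Event.inv o'

/-- A sequential event history: invocations immediately followed by their matching
responses, possibly ending with a single pending invocation (no two operations are
concurrent). -/
def Sequential : List (Event Op Val) → Prop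
  | [] => True
  | [Event.inv _] => True
  | Event.inv o :: Event.res o' _ :: L => o = o' ∧ Sequential L
  | _ => False

/-- `x` occurs at most once in the list `L`. -/
def AtMostOnce {β : Type _} (x : β) (L : List β) : Prop :=
  ∀ (i j : ℕ) (hi : i < L.length) (hj : j < L.length),
    L.get ⟨i, hi⟩ = x → L.get ⟨j, hj⟩ = x → i = j

/-- Operation `o` has at most one response event in `L`. -/
def AtMostOneRes (o : Op) (L : List (Event Op Val)) : Prop :=
  ∀ (i j : ℕ) (hi : i < L.length) (hj : j < L.length) (v v' : Val),
    L.get ⟨i, hi⟩ = Event.res o v → L.get ⟨j, hj⟩ = Event.res o v' → i = j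

/-- Well-formedness of an implementation: in every history, each operation is
invoked at most once, responds at most once, and responses follow invocations. -/
def WellFormed (I : Impl n Op Val) : Prop :=
  ∀ H ∈ Histories I,
    (∀ o : Op, AtMostOnce (Event.inv o) (events I H)) ∧
    (∀ o : Op, AtMostOneRes o (events I H)) ∧
    (∀ (o : Op) (v : Val), Event.res o v ∈ events I H → Event.inv o ∈ events I H)

/-- `L'` is a completion of the event history `L`: the events of a subset (`removed`)
of the pending operations of `L` are removed, and the remaining pending operations
are completed by appending responses `R` for them. -/
def IsCompletion (L L' : List (Event Op Val)) : Prop :=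
  ∃ (removed : Op → Bool) (R : List (Event Op Val)),
    (∀ o, removed o = true → Pending o L) ∧
    (∀ ev ∈ R, ∃ (o : Op) (v : Val), ev = Event.res o v ∧ Pending o L ∧ removed o = false) ∧
    (∀ o : Op, Pending o L → removed o = false → ∃ v, Event.res o v ∈ R) ∧
    (R.map Event.opOf).Nodup ∧
    L' = L.filter (fun ev => !removed ev.opOf) ++ R

/-- `f` is a linearization function for (the set of histories of) `I` with respect to
the sequential specification `Spec`: it maps each history `H` of `I` to a sequential
history `f H` that (1) has exactly the same operations (with the same responses) as
some completion of the events of `H`, (2) respects precedence, and (3) conforms to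
`Spec`. -/
def IsLinearizationFn (I : Impl n Op Val) (Spec : List (Event Op Val) → Prop)
    (f : List (Step n I.Msg) → List (Event Op Val)) : Prop :=
  ∀ H ∈ Histories I,
    Sequential (f H) ∧
    (∃ L', IsCompletion (events I H) L' ∧
      (∀ ev : Event Op Val, ev ∈ f H ↔ ev ∈ L') ∧
      (∀ o o' : Op, Precedes L' o o' → Precedes (f H) o o')) ∧
    Spec (f H)

/-- `I` is linearizable with respect to the sequential specification `Spec`. -/
def Linearizable (I : Impl n Op Val) (Spec : List (Event Op Val) → Prop) : Prop :=
  ∃ f, IsLinearizationFn I Spec f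

/-- `I` is strongly linearizable: there is a linearization function mapping
prefixes of histories to prefixes of their linearizations. -/
def StronglyLinearizable (I : Impl n Op Val) (Spec : List (Event Op Val) → Prop) : Prop :=
  ∃ f, IsLinearizationFn I Spec f ∧
    ∀ G H, G ∈ Histories I → H ∈ Histories I → G <+: H → f G <+: f H

/-- The finite history consisting of the first `k` steps of an infinite history `S`. -/
def prefixSteps {β : Type _} (S : ℕ → β) (k : ℕ) : List β :=
  (List.range k).map S

/-- The infinite history `S` is applicable to `C`: every step is applicable to the
configuration reached by the preceding steps. -/
def InfApplicable (I : Impl n Op Val) (C : Config I) (S : ℕ → Step n I.Msg) : Prop :=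
  ∀ k, Applicable I (applyHist I C (prefixSteps S k)) (S k)

/-- Process `p` is correct in the infinite history `S`: it takes infinitely many steps. -/
def CorrectProc {Msg : Type} (p : Fin n) (S : ℕ → Step n Msg) : Prop :=
  ∀ k, ∃ k' ≥ k, (S k').1 = p

/-- At most one process crashes (i.e., takes only finitely many steps) in `S`. -/
def AtMostOneCrash {Msg : Type} (S : ℕ → Step n Msg) : Prop :=
  ∀ p q : Fin n, ¬ CorrectProc p S → ¬ CorrectProc q S → p = q

/-- Every message sent to a correct process is eventually received. -/
def FairDelivery (I : Impl n Op Val) (C : Config I) (S : ℕ → Step n I.Msg) : Prop :=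
  ∀ (k : ℕ) (p : Fin n) (m : I.Msg), CorrectProc p S →
    (p, m) ∈ (applyHist I C (prefixSteps S k)).buffer →
    ∃ k' ≥ k, S k' = (p, some m)

/-- `I` is 1-resilient lock-free: for every reachable configuration (reached by a
history `H₀`) with a pending operation by process `p`, and every infinite history
applicable to it in which at most one process crashes, `p` is correct, and every
message sent to a correct process is eventually received, some finite prefix
completes an operation not yet complete. -/
def OneResilientLockFree (I : Impl n Op Val) : Prop :=
  ∀ H₀ ∈ Histories I, ∀ (p : Fin n) (o : Op),
    I.procOf o = p → Pending o (events I H₀) →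
    ∀ S : ℕ → Step n I.Msg,
      InfApplicable I (applyHist I (initConfig I) H₀) S →
      AtMostOneCrash S → CorrectProc p S →
      FairDelivery I (applyHist I (initConfig I) H₀) S →
      ∃ (k : ℕ) (o' : Op),
        Completed o' (events I (H₀ ++ prefixSteps S k)) ∧ ¬ Completed o' (events I H₀)

end MP

namespace MP

/-- The operations of a Test-or-Set (ToS) object: a single TEST and a single SET. -/
inductive ToSOp : Type
  | test
  | set
deriving DecidableEq

/-- Sequential specification of Test-or-Set (`true` codes the bit 1, `false` codes 0):
a TEST returns 1 iff a SET occurs before it, and 0 otherwise. -/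
def ToSSpec (L : List (Event ToSOp Bool)) : Prop :=
  ∀ (i : ℕ) (hi : i < L.length) (v : Bool), L.get ⟨i, hi⟩ = Event.res ToSOp.test v →
    (v = true ↔ ∃ (j : ℕ) (hj : j < L.length), j < i ∧ L.get ⟨j, hj⟩ = Event.inv ToSOp.set)

variable {n : ℕ}

/-- The system obtained by running algorithm `A` on a ToS implementation `I`:
the distinguished process `p0` invokes TEST (as its first step), the distinguished
process `p1 ≠ p0` invokes SET (as its first step), each operation is invoked only
once, and the other processes only help. -/
structure ToSAlg (I : Impl n ToSOp Bool) (p0 p1 : Fin n) : Prop where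
  distinct : p0 ≠ p1
  proc_test : I.procOf ToSOp.test = p0
  proc_set : I.procOf ToSOp.set = p1
  events_own : ∀ (p : Fin n) (s s' : I.PState) (ev : Event ToSOp Bool),
    I.eventOf p s s' = some ev → I.procOf ev.opOf = p
  wellFormed : WellFormed I
  invokes_test : ∀ m : Option I.Msg,
    I.eventOf p0 (I.init p0) (I.trans p0 (I.init p0) m).1 = some (Event.inv ToSOp.test)
  invokes_set : ∀ m : Option I.Msg,
    I.eventOf p1 (I.init p1) (I.trans p1 (I.init p1) m).1 = some (Event.inv ToSOp.set)

/-- The TEST operation has returned the value `v` in the history `H` (applied to the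
initial configuration). -/
def TestReturned (I : Impl n ToSOp Bool) (H : List (Step n I.Msg)) (v : Bool) : Prop :=
  Event.res ToSOp.test v ∈ events I H

/-- The configuration reached by the history `H₀` is `v`-valent: there is no finite
history `H` applicable to it such that the TEST operation has returned `1 - v`. -/
def ToSValent (I : Impl n ToSOp Bool) (H₀ : List (Step n I.Msg)) (v : Bool) : Prop :=
  (H₀ ∈ Histories I) ∧
  ∀ H : List (Step n I.Msg), (H₀ ++ H) ∈ Histories I → ¬ TestReturned I (H₀ ++ H) (!v)

/-- The configuration reached by `H₀` is bivalent: neither 0-valent nor 1-valent. -/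
def ToSBivalent (I : Impl n ToSOp Bool) (H₀ : List (Step n I.Msg)) : Prop :=
  (H₀ ∈ Histories I) ∧ ¬ ToSValent I H₀ false ∧ ¬ ToSValent I H₀ true

end MP

namespace MP

section Aux

variable {n : ℕ} {Op Val : Type}

theorem runEvents_append (I : Impl n Op Val) (C : Config I) (A B : List (Step n I.Msg)) :
    runEvents I C (A ++ B) = runEvents I C A ++ runEvents I (applyHist I C A) B := by
  induction A generalizing C with
  | nil => rfl
  | cons e A ih => simp [runEvents, applyHist, ih]

theorem events_prefix (I : Impl n Op Val) (H₀ H : List (Step n I.Msg)) :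
    events I H₀ <+: events I (H₀ ++ H) :=
  ⟨runEvents I (applyHist I (initConfig I) H₀) H,
    (runEvents_append I (initConfig I) H₀ H).symm⟩

theorem no_two_res {o : Op} {v v' : Val} {L : List (Event Op Val)}
    (h : AtMostOneRes o L) (h1 : Event.res o v ∈ L) (h2 : Event.res o v' ∈ L) : v = v' := by
  obtain ⟨i, hi⟩ := List.mem_iff_get.mp h1
  obtain ⟨j, hj⟩ := List.mem_iff_get.mp h2
  have hij := h i.1 j.1 i.2 j.2 v v' hi hj
  have : L.get i = L.get j := by
    congr 1
    exact Fin.ext hij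
  rw [hi, hj] at this
  injection this

theorem completed_mem_lin {I : Impl n Op Val} {Spec : List (Event Op Val) → Prop}
    {f : List (Step n I.Msg) → List (Event Op Val)}
    (hf : IsLinearizationFn I Spec f) {H : List (Step n I.Msg)} (hH : H ∈ Histories I)
    {o : Op} (hc : Completed o (events I H)) :
    Event.inv o ∈ f H ∧ ∀ v : Val, Event.res o v ∈ events I H → Event.res o v ∈ f H := by
  obtain ⟨_, ⟨L', ⟨removed, R, hrem, _, _, _, hL'⟩, hmem, _⟩, _⟩ := hf H hH
  have hro : removed o = false := by
    by_contra h
    rw [Bool.not_eq_false] at h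
    obtain ⟨v, hv⟩ := hc.2
    exact (hrem o h).2 v hv
  constructor
  · refine (hmem _).mpr ?_
    rw [hL']
    exact List.mem_append.mpr (Or.inl (List.mem_filter.mpr ⟨hc.1, by simp [Event.opOf, hro]⟩))
  · intro v hv
    refine (hmem _).mpr ?_
    rw [hL']
    exact List.mem_append.mpr (Or.inl (List.mem_filter.mpr ⟨hv, by simp [Event.opOf, hro]⟩))

theorem res_mem_lin_cases {I : Impl n Op Val} {Spec : List (Event Op Val) → Prop}
    {f : List (Step n I.Msg) → List (Event Op Val)}
    (hf : IsLinearizationFn I Spec f) {H : List (Step n I.Msg)} (hH : H ∈ Histories I)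
    {o : Op} {v : Val} (h : Event.res o v ∈ f H) :
    Event.res o v ∈ events I H ∨ Pending o (events I H) := by
  obtain ⟨_, ⟨L', ⟨removed, R, _, hR, _, _, hL'⟩, hmem, _⟩, _⟩ := hf H hH
  have h' : Event.res o v ∈ L' := (hmem _).mp h
  rw [hL'] at h'
  rcases List.mem_append.mp h' with h' | h'
  · exact Or.inl (List.mem_filter.mp h').1
  · obtain ⟨o', v', heq, hp, _⟩ := hR _ h'
    have ho : o = o' := by injection heq
    exact Or.inr (ho ▸ hp)

end Aux

/-- **Claim 2.** If `I` is additionally strongly linearizable and `C` is a reachable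
bivalent configuration of algorithm `A` (reached by a history `H₀`), then no operation
has completed in `C`. -/
theorem ToS_bivalent_no_completed_op (n : ℕ) (hn : 2 ≤ n)
    (I : Impl n ToSOp Bool) (p0 p1 : Fin n)
    (halg : ToSAlg I p0 p1) (hlf : OneResilientLockFree I)
    (hsl : StronglyLinearizable I ToSSpec)
    (H₀ : List (Step n I.Msg)) (hbi : ToSBivalent I H₀) :
    ∀ o : ToSOp, ¬ Completed o (events I H₀) := by
  obtain ⟨hH₀, hnf, hnt⟩ := hbi
  -- A TEST response cannot have occurred in `H₀` (else `H₀` would be `v`-valent).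
  have hnoTestRes : ∀ v : Bool, Event.res ToSOp.test v ∈ events I H₀ → False := by
    intro v hv
    have hval : ToSValent I H₀ v := by
      refine ⟨hH₀, fun H hH hret => ?_⟩
      have h1 : Event.res ToSOp.test v ∈ events I (H₀ ++ H) :=
        (events_prefix I H₀ H).subset hv
      have h2 : Event.res ToSOp.test (!v) ∈ events I (H₀ ++ H) := hret
      have := no_two_res ((halg.wellFormed _ hH).2.1 ToSOp.test) h1 h2
      simp at this
    cases v
    · exact hnf hval
    · exact hnt hval
  intro o hC
  cases o with
  | test =>
    obtain ⟨_, v, hv⟩ := hC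
    exact hnoTestRes v hv
  | set =>
    obtain ⟨f, hf, hstrong⟩ := hsl
    -- an extension in which TEST returns false
    have hHf : ∃ Hf, (H₀ ++ Hf) ∈ Histories I ∧ TestReturned I (H₀ ++ Hf) false := by
      by_contra h
      push_neg at h
      exact hnt ⟨hH₀, fun H hH => by simpa using h H hH⟩
    -- an extension in which TEST returns true
    have hHt : ∃ Ht, (H₀ ++ Ht) ∈ Histories I ∧ TestReturned I (H₀ ++ Ht) true := by
      by_contra h
      push_neg at h
      exact hnf ⟨hH₀, fun H hH => by simpa using h H hH⟩
    obtain ⟨Hf, hHfH, hretf⟩ := hHf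
    obtain ⟨Ht, hHtH, hrett⟩ := hHt
    -- TEST is completed in `H₀ ++ Hf`
    have hinvf : Event.inv ToSOp.test ∈ events I (H₀ ++ Hf) :=
      (halg.wellFormed _ hHfH).2.2 ToSOp.test false hretf
    have hcompf : Completed ToSOp.test (events I (H₀ ++ Hf)) := ⟨hinvf, false, hretf⟩
    -- hence `res test false ∈ f (H₀ ++ Hf)`
    have hresf : Event.res ToSOp.test false ∈ f (H₀ ++ Hf) :=
      (completed_mem_lin hf hHfH hcompf).2 false hretf
    -- SET is completed in `H₀`, hence `inv set ∈ f H₀`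
    have hinvset : Event.inv ToSOp.set ∈ f H₀ := (completed_mem_lin hf hH₀ hC).1
    obtain ⟨j₀, hj₀⟩ := List.mem_iff_get.mp hinvset
    -- `res test false ∉ f H₀`
    have hnotin : Event.res ToSOp.test false ∉ f H₀ := by
      intro hmem0
      have hpret : f H₀ <+: f (H₀ ++ Ht) := hstrong H₀ (H₀ ++ Ht) hH₀ hHtH ⟨Ht, rfl⟩
      have hmemt : Event.res ToSOp.test false ∈ f (H₀ ++ Ht) := hpret.subset hmem0
      rcases res_mem_lin_cases hf hHtH hmemt with h | h
      · have := no_two_res ((halg.wellFormed _ hHtH).2.1 ToSOp.test) h hrett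
        simp at this
      · exact h.2 true hrett
    -- locate `res test false` in `f (H₀ ++ Hf)`
    obtain ⟨i, hi⟩ := List.mem_iff_get.mp hresf
    have hfp : f H₀ <+: f (H₀ ++ Hf) := hstrong H₀ (H₀ ++ Hf) hH₀ hHfH ⟨Hf, rfl⟩
    have hlen : (f H₀).length ≤ i.1 := by
      by_contra h
      push_neg at h
      apply hnotin
      have hg : (f H₀)[i.1]'h = Event.res ToSOp.test false := by
        simp only [List.get_eq_getElem] at hi
        rw [hfp.getElem h]
        exact hi
      exact hg ▸ List.getElem_mem h
    have hji : j₀.1 < i.1 := lt_of_lt_of_le j₀.2 hlen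
    -- the spec for `f (H₀ ++ Hf)` is violated
    have hspec : ToSSpec (f (H₀ ++ Hf)) := (hf (H₀ ++ Hf) hHfH).2.2
    have := hspec i.1 i.2 false hi
    have hgj : (f (H₀ ++ Hf)).get ⟨j₀.1, lt_of_lt_of_le j₀.2 hfp.length_le⟩
        = Event.inv ToSOp.set := by
      simp only [List.get_eq_getElem] at hj₀ ⊢
      rw [← hfp.getElem j₀.2]
      exact hj₀
    have : (false : Bool) = true :=
      this.mpr ⟨j₀.1, lt_of_lt_of_le j₀.2 hfp.length_le, hji, hgj⟩
    simp at this

end MP
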